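/- For fixed α > 0, the limit as r → 0⁺ of B_2(r) := (1/r²)(3·B_1(r) + (4α²/√(απ))·exp(-α r²)) exists and equals -(8/5)·α^{5/2}/√π, where B_1(r) = (1/r²)(-erf(√α·r)/r + (2α/√(απ))·exp(-αr²)). -/

import Mathlib

/-- The error function `erf(x) = (2/√π) ∫₀ˣ exp(-t²) dt`. -/
noncomputable def erf (x : ℝ) : ℝ :=
  (2 / Real.sqrt Real.pi) * ∫ t in (0:ℝ)..x, Real.exp (-t ^ 2)

/-- `B_1` from the recursion, explicitly. -/
noncomputable def B1 (α : ℝ) (r : ℝ) : ℝ :=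
  (1 / r ^ 2) * (-erf (Real.sqrt α * r) / r
    + 2 * α / Real.sqrt (α * Real.pi) * Real.exp (-α * r ^ 2))

lemma erf_hasDerivAt (x : ℝ) :
    HasDerivAt erf (2 / Real.sqrt Real.pi * Real.exp (-x ^ 2)) x := by
  have hc : Continuous fun t : ℝ => Real.exp (-t ^ 2) := by continuity
  have h := intervalIntegral.integral_hasDerivAt_right
    (hc.intervalIntegrable 0 x)
    hc.aestronglyMeasurable.stronglyMeasurableAtFilter
    hc.continuousAt
  exact (h.const_mul (2 / Real.sqrt Real.pi))

noncomputable def Fint (α : ℝ) (r : ℝ) : ℝ :=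
  ∫ t in (0:ℝ)..r, t ^ 4 * Real.exp (-α * t ^ 2)

lemma Fint_hasDerivAt (α r : ℝ) :
    HasDerivAt (Fint α) (r ^ 4 * Real.exp (-α * r ^ 2)) r := by
  have hc : Continuous fun t : ℝ => t ^ 4 * Real.exp (-α * t ^ 2) := by continuity
  exact intervalIntegral.integral_hasDerivAt_right
    (hc.intervalIntegrable 0 r)
    hc.aestronglyMeasurable.stronglyMeasurableAtFilter
    hc.continuousAt

/-- Key identity: `3·erf(√α r) = c·(3r + 2αr³)·e^{-αr²} + 4α²·c·F(r)` with `c = 2√α/√π`. -/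
lemma key_identity (α : ℝ) (hα : 0 < α) (r : ℝ) :
    3 * erf (Real.sqrt α * r)
      = 2 * Real.sqrt α / Real.sqrt Real.pi *
          ((3 * r + 2 * α * r ^ 3) * Real.exp (-α * r ^ 2))
        + 4 * α ^ 2 * (2 * Real.sqrt α / Real.sqrt Real.pi) * Fint α r := by
  set c : ℝ := 2 * Real.sqrt α / Real.sqrt Real.pi with hc
  set G : ℝ → ℝ := fun r => 3 * erf (Real.sqrt α * r)
    - (c * ((3 * r + 2 * α * r ^ 3) * Real.exp (-α * r ^ 2))
        + 4 * α ^ 2 * c * Fint α r) with hG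
  have hderiv : ∀ x : ℝ, HasDerivAt G 0 x := by
    intro x
    have h1 : HasDerivAt (fun r : ℝ => erf (Real.sqrt α * r))
        (2 / Real.sqrt Real.pi * Real.exp (-(Real.sqrt α * x) ^ 2) * Real.sqrt α) x := by
      have := (erf_hasDerivAt (Real.sqrt α * x)).comp x
        ((hasDerivAt_id x).const_mul (Real.sqrt α))
      simpa [Function.comp_def, mul_comm] using this
    have he : HasDerivAt (fun r : ℝ => Real.exp (-α * r ^ 2))
        (Real.exp (-α * x ^ 2) * (-α * (2 * x))) x := by
      have hp : HasDerivAt (fun r : ℝ => -α * r ^ 2) (-α * (2 * x)) x := by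
        simpa using ((hasDerivAt_pow 2 x).const_mul (-α))
      exact hp.exp
    have hpoly : HasDerivAt (fun r : ℝ => 3 * r + 2 * α * r ^ 3)
        (3 + 2 * α * (3 * x ^ 2)) x := by
      have := ((hasDerivAt_id x).const_mul (3:ℝ)).add
        (((hasDerivAt_pow 3 x)).const_mul (2 * α))
      exact this.congr_deriv (by norm_num <;> ring)
    have h2 : HasDerivAt (fun r : ℝ => (3 * r + 2 * α * r ^ 3) * Real.exp (-α * r ^ 2))
        ((3 + 2 * α * (3 * x ^ 2)) * Real.exp (-α * x ^ 2)
          + (3 * x + 2 * α * x ^ 3) * (Real.exp (-α * x ^ 2) * (-α * (2 * x)))) x :=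
      hpoly.mul he
    have h3 := Fint_hasDerivAt α x
    have hx2 : (Real.sqrt α * x) ^ 2 = α * x ^ 2 := by
      rw [mul_pow, Real.sq_sqrt hα.le]
    have hsq : 2 / Real.sqrt Real.pi * Real.sqrt α = c := by rw [hc]; ring
    have hcomb := ((h1.const_mul (3:ℝ)).sub
      ((h2.const_mul c).add (h3.const_mul (4 * α ^ 2 * c))))
    exact hcomb.congr_deriv (by rw [hx2, ← hsq]; ring)
  have hG0 : G 0 = 0 := by
    simp [hG, erf, Fint]
  have hconst : ∀ x, G x = G 0 :=
    fun x => is_const_of_deriv_eq_zero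
      (fun y => (hderiv y).differentiableAt)
      (fun y => (hderiv y).deriv) x 0
  have := hconst r
  rw [hG0] at this
  have : G r = 0 := this
  simp only [hG] at this
  linarith

lemma Fint_div_tendsto (α : ℝ) (hα : 0 < α) :
    Filter.Tendsto (fun r : ℝ => Fint α r / r ^ 5)
      (nhdsWithin 0 (Set.Ioi 0)) (nhds (1 / 5)) := by
  have hcont : Continuous fun t : ℝ => t ^ 4 * Real.exp (-α * t ^ 2) := by continuity
  have hupper : ∀ r ∈ Set.Ioi (0:ℝ), Fint α r / r ^ 5 ≤ 1 / 5 := by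
    intro r hr
    have hr0 : (0:ℝ) < r := hr
    have h1 : Fint α r ≤ ∫ t in (0:ℝ)..r, t ^ 4 := by
      apply intervalIntegral.integral_mono_on hr0.le
        (hcont.intervalIntegrable 0 r) ((continuous_pow 4).intervalIntegrable 0 r)
      intro x hx
      have hx4 : (0:ℝ) ≤ x ^ 4 := by positivity
      nlinarith [Real.exp_le_one_iff.mpr (by nlinarith [sq_nonneg x, hα.le] :
        -α * x ^ 2 ≤ 0), Real.exp_pos (-α * x ^ 2)]
    rw [integral_pow] at h1
    rw [div_le_div_iff₀ (by positivity) (by norm_num)]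
    calc Fint α r * 5 ≤ ((r ^ (4+1) - 0 ^ (4+1)) / (4+1)) * 5 := by nlinarith
      _ = r ^ 5 := by norm_num
      _ = 1 * r ^ 5 := by ring
  have hlower : ∀ r ∈ Set.Ioi (0:ℝ),
      Real.exp (-α * r ^ 2) / 5 ≤ Fint α r / r ^ 5 := by
    intro r hr
    have hr0 : (0:ℝ) < r := hr
    have h1 : (∫ t in (0:ℝ)..r, Real.exp (-α * r ^ 2) * t ^ 4) ≤ Fint α r := by
      apply intervalIntegral.integral_mono_on hr0.le
        ((continuous_const.mul (continuous_pow 4)).intervalIntegrable 0 r)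
        (hcont.intervalIntegrable 0 r)
      intro x hx
      have hx4 : (0:ℝ) ≤ x ^ 4 := by positivity
      have hle : -α * r ^ 2 ≤ -α * x ^ 2 := by
        nlinarith [mul_self_le_mul_self hx.1 hx.2, hα.le]
      have := Real.exp_le_exp.mpr hle
      show Real.exp (-α * r ^ 2) * x ^ 4 ≤ x ^ 4 * Real.exp (-α * x ^ 2)
      nlinarith [Real.exp_pos (-α * r ^ 2)]
    rw [intervalIntegral.integral_const_mul, integral_pow] at h1
    rw [div_le_div_iff₀ (by norm_num) (by positivity)]
    nlinarith [Real.exp_pos (-α * r ^ 2)]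
  have htl : Filter.Tendsto (fun r : ℝ => Real.exp (-α * r ^ 2) / 5)
      (nhdsWithin 0 (Set.Ioi 0)) (nhds (1 / 5)) := by
    have : Continuous (fun r : ℝ => Real.exp (-α * r ^ 2) / 5) := by continuity
    have h := (this.tendsto 0).mono_left (nhdsWithin_le_nhds (s := Set.Ioi 0))
    simpa using h
  refine tendsto_of_tendsto_of_tendsto_of_le_of_le' htl tendsto_const_nhds ?_ ?_
  · filter_upwards [self_mem_nhdsWithin] with r hr using hlower r hr
  · filter_upwards [self_mem_nhdsWithin] with r hr using hupper r hr

theorem B2_tendsto_at_zero (α : ℝ) (hα : 0 < α) :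
    Filter.Tendsto
      (fun r : ℝ => (1 / r ^ 2) * (3 * B1 α r
        + 4 * α ^ 2 / Real.sqrt (α * Real.pi) * Real.exp (-α * r ^ 2)))
      (nhdsWithin 0 (Set.Ioi 0))
      (nhds (-(8 / 5) * α ^ ((5 : ℝ) / 2) / Real.sqrt Real.pi)) := by
  set c : ℝ := 2 * Real.sqrt α / Real.sqrt Real.pi with hc
  have hsa : (0:ℝ) < Real.sqrt α := Real.sqrt_pos.mpr hα
  have hsp : (0:ℝ) < Real.sqrt Real.pi := Real.sqrt_pos.mpr Real.pi_pos
  have hsap : Real.sqrt (α * Real.pi) = Real.sqrt α * Real.sqrt Real.pi :=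
    Real.sqrt_mul hα.le _
  have hαsq : Real.sqrt α * Real.sqrt α = α := Real.mul_self_sqrt hα.le
  have heq : ∀ r ∈ Set.Ioi (0:ℝ),
      (-4 * α ^ 2 * c) * (Fint α r / r ^ 5)
        = (1 / r ^ 2) * (3 * B1 α r
          + 4 * α ^ 2 / Real.sqrt (α * Real.pi) * Real.exp (-α * r ^ 2)) := by
    intro r hr
    have hr0 : (0:ℝ) < r := hr
    have hkey := key_identity α hα r
    have hE : erf (Real.sqrt α * r)
        = (c * ((3 * r + 2 * α * r ^ 3) * Real.exp (-α * r ^ 2))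
            + 4 * α ^ 2 * c * Fint α r) / 3 := by linarith
    rw [B1, hE, hsap, hc]
    obtain ⟨s, hs⟩ : ∃ s, Real.sqrt α = s := ⟨_, rfl⟩
    have hs0 : (0:ℝ) < s := hs ▸ hsa
    have h2 : α = s ^ 2 := by rw [← hs, Real.sq_sqrt hα.le]
    rw [hs, h2]
    field_simp
    ring
  have hlim := (Fint_div_tendsto α hα).const_mul (-4 * α ^ 2 * c)
  have hval : (-4 * α ^ 2 * c) * (1 / 5)
      = -(8 / 5) * α ^ ((5 : ℝ) / 2) / Real.sqrt Real.pi := by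
    have h52 : α ^ ((5 : ℝ) / 2) = α ^ 2 * Real.sqrt α := by
      have h1 : α ^ ((5 : ℝ) / 2) = (Real.sqrt α) ^ (5:ℕ) := by
        rw [Real.sqrt_eq_rpow, ← Real.rpow_natCast (α ^ ((1:ℝ)/2)) 5,
          ← Real.rpow_mul hα.le]
        norm_num
      rw [h1, show ((Real.sqrt α) ^ (5:ℕ) : ℝ)
        = (Real.sqrt α ^ 2) ^ 2 * Real.sqrt α from by ring, Real.sq_sqrt hα.le]
    rw [h52, hc]; ring
  rw [← hval]
  exact hlim.congr' (by filter_upwards [self_mem_nhdsWithin] with r hr using heq r hr)
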